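/- Let f : H(k,n) → H(l,n) be a graded algebra isomorphism, and for j = 1,…,n let I_j(m,n) = (t_{n-j+1},…,t_n) ⊆ H(m,n). Then f(I_j(k,n)) = I_j(l,n) for all j. -/

import Mathlib

open MvPolynomial

/- The graded ring H(k,n) = ℤ[t₁,…,t_n]/(t₁⁴+kt₁³t₂, …, t_{n-1}⁴+kt_{n-1}³t_n, t_n⁴)
with |t_i| = 2.  We index the `n` variables t₁,…,t_n of the paper by `Fin n`;
a homogeneous element of topological degree `2*j` is (the class of) a polynomial
that is homogeneous of polynomial degree `j`. -/

/-- The ideal (t₁⁴+kt₁³t₂, …, t_{n-1}⁴+k t_{n-1}³t_n, t_n⁴), with the `n`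
variables indexed by `Fin (n+1)` for `n+1` variables... -/
noncomputable def Hideal (k n : ℕ) : Ideal (MvPolynomial (Fin (n + 1)) ℤ) :=
  Ideal.span ({X (Fin.last n) ^ 4} ∪
    Set.range fun i : Fin n =>
      X (Fin.castSucc i) ^ 4 + (k : ℤ) • (X (Fin.castSucc i) ^ 3 * X i.succ))

/-- The ring `H(k, n+1 vars)`: `H k n` has `n+1` variables `t₀,…,t_n`,
so it is the ring H(k, n+1) of the paper. -/
noncomputable abbrev HRing (k n : ℕ) : Type :=
  MvPolynomial (Fin (n + 1)) ℤ ⧸ Hideal k n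

/-- The generator t_i of H(k,n). -/
noncomputable def Ht (k n : ℕ) (i : Fin (n + 1)) : HRing k n :=
  Ideal.Quotient.mk _ (X i)

/-- A ring homomorphism `HRing k n → HRing l n` preserves the grading (all
gradings in sight are concentrated in even topological degrees `2*j`) if it
sends classes of homogeneous polynomials of degree `j` to classes of
homogeneous polynomials of degree `j`, for every `j`. -/
def PreservesGrading {k l n : ℕ} (f : HRing k n →+* HRing l n) : Prop :=
  ∀ (j : ℕ) (x : MvPolynomial (Fin (n + 1)) ℤ), x.IsHomogeneous j →
    ∃ y : MvPolynomial (Fin (n + 1)) ℤ, y.IsHomogeneous j ∧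
      f (Ideal.Quotient.mk _ x) = Ideal.Quotient.mk _ y

/-- A graded (ring/algebra) isomorphism H(k,n) ≅ H(l,n): a ring isomorphism
preserving the grading in both directions.  (Every ring homomorphism between
these rings is automatically a ℤ-algebra homomorphism.) -/
def IsGradedIso {k l n : ℕ} (f : HRing k n ≃+* HRing l n) : Prop :=
  PreservesGrading (f : HRing k n →+* HRing l n) ∧
    PreservesGrading (f.symm : HRing l n →+* HRing k n)

/-- The ideal I_j(m, n vars) = (t_{n-j+1},…,t_n) of H(m,·): the ideal generated
by the last `j` variables.  With variables indexed by `Fin (n+1)`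
(i.e. `n+1` variables), these are the `t_i` with `(n+1) - j ≤ i`. -/
noncomputable def Iideal (m n j : ℕ) : Ideal (HRing m n) :=
  Ideal.span {x | ∃ i : Fin (n + 1), (n + 1) - j ≤ (i : ℕ) ∧ x = Ht m n i}

/- STATEMENT 13: Let f : H(k,n) → H(l,n) be a graded algebra isomorphism and
I_j(m,n) = (t_{n-j+1},…,t_n).  Then f(I_j(k,n)) = I_j(l,n) for j = 1,…,n.
(k, l positive integers; `HRing k n` has `n+1` variables, so `j` ranges over
1,…,n+1.) -/

private noncomputable def D2 (c d : ℕ) : Fin 2 →₀ ℕ := Finsupp.single 0 c + Finsupp.single 1 d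

private lemma D2_apply0 (i j : ℕ) : D2 i j 0 = i := by
  simp [D2, Finsupp.single_apply, Fin.ext_iff]

private lemma D2_apply1 (i j : ℕ) : D2 i j 1 = j := by
  simp [D2, Finsupp.single_apply, Fin.ext_iff]

private lemma D2_eq_iff {i j c d : ℕ} : D2 i j = D2 c d ↔ i = c ∧ j = d := by
  constructor
  · intro h
    exact ⟨by simpa [D2_apply0] using DFunLike.congr_fun h 0,
           by simpa [D2_apply1] using DFunLike.congr_fun h 1⟩
  · rintro ⟨rfl, rfl⟩; rfl

private lemma D2_le_iff {i j c d : ℕ} : D2 i j ≤ D2 c d ↔ i ≤ c ∧ j ≤ d := by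
  rw [Finsupp.le_def]
  constructor
  · intro h
    exact ⟨by simpa [D2_apply0] using h 0, by simpa [D2_apply1] using h 1⟩
  · rintro ⟨h1, h2⟩ s
    fin_cases s <;> simp [D2_apply0, D2_apply1, h1, h2]

private lemma coeff_Xij (c d i j : ℕ) :
    coeff (D2 c d) ((X 0 : MvPolynomial (Fin 2) ℤ) ^ i * X 1 ^ j)
      = if c = i ∧ d = j then 1 else 0 := by
  rw [X_pow_eq_monomial, X_pow_eq_monomial, monomial_mul, coeff_monomial, mul_one]
  have : (Finsupp.single (0 : Fin 2) i + Finsupp.single 1 j) = D2 i j := rfl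
  rw [this]
  by_cases h : i = c ∧ j = d
  · rw [if_pos (D2_eq_iff.mpr h), if_pos ⟨h.1.symm, h.2.symm⟩]
  · rw [if_neg (fun hh => h (D2_eq_iff.mp hh)),
      if_neg (fun hh => h ⟨hh.1.symm, hh.2.symm⟩)]

lemma Hideal_one (l : ℕ) : Hideal l 1 =
    Ideal.span {(X 1 : MvPolynomial (Fin 2) ℤ) ^ 4,
      X 0 ^ 4 + (l : ℤ) • (X 0 ^ 3 * X 1)} := by
  rw [Hideal]
  congr 1
  rw [Set.range_unique]
  have h0 : Fin.castSucc (default : Fin 1) = 0 := rfl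
  have h1 : (default : Fin 1).succ = 1 := rfl
  rw [h0, h1]
  have h2 : Fin.last 1 = 1 := rfl
  rw [h2, Set.singleton_union]

private lemma X03X1 : (X 0 : MvPolynomial (Fin 2) ℤ) ^ 3 * X 1 = monomial (D2 3 1) 1 := by
  rw [← pow_one (X 1 : MvPolynomial (Fin 2) ℤ), X_pow_eq_monomial, X_pow_eq_monomial,
    monomial_mul, mul_one]
  rfl

private lemma coeff_mul_A (u : MvPolynomial (Fin 2) ℤ) (c d : ℕ) (h : d < 4) :
    coeff (D2 c d) (u * X 1 ^ 4) = 0 := by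
  rw [X_pow_eq_monomial, coeff_mul_monomial', if_neg]
  rw [Finsupp.single_le_iff, D2_apply1]
  omega

private lemma coeff_mul_X04_low (v : MvPolynomial (Fin 2) ℤ) (c d : ℕ) (h : c < 4) :
    coeff (D2 c d) (v * X 0 ^ 4) = 0 := by
  rw [X_pow_eq_monomial, coeff_mul_monomial', if_neg]
  rw [Finsupp.single_le_iff, D2_apply0]
  omega

private lemma coeff_mul_X04_40 (v : MvPolynomial (Fin 2) ℤ) :
    coeff (D2 4 0) (v * X 0 ^ 4) = coeff 0 v := by
  have hD : D2 4 0 = Finsupp.single 0 4 := by simp [D2]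
  rw [X_pow_eq_monomial, coeff_mul_monomial', if_pos (by rw [hD])]
  rw [hD, tsub_self, mul_one]

private lemma coeff_mul_B2_low (v : MvPolynomial (Fin 2) ℤ) (c d : ℕ) (h : c < 3 ∨ d < 1) :
    coeff (D2 c d) (v * ((X 0 : MvPolynomial (Fin 2) ℤ) ^ 3 * X 1)) = 0 := by
  rw [X03X1, coeff_mul_monomial', if_neg]
  rw [D2_le_iff]
  omega

private lemma coeff_mul_B2_31 (v : MvPolynomial (Fin 2) ℤ) :
    coeff (D2 3 1) (v * ((X 0 : MvPolynomial (Fin 2) ℤ) ^ 3 * X 1)) = coeff 0 v := by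
  rw [X03X1, coeff_mul_monomial', if_pos le_rfl, tsub_self, mul_one]

private lemma expand4 (a b : ℤ) :
    (a • (X 0 : MvPolynomial (Fin 2) ℤ) + b • X 1) ^ 4 =
      C (a ^ 4) * (X 0 ^ 4 * X 1 ^ 0) + C (4 * a ^ 3 * b) * (X 0 ^ 3 * X 1 ^ 1) +
      C (6 * a ^ 2 * b ^ 2) * (X 0 ^ 2 * X 1 ^ 2) + C (4 * a * b ^ 3) * (X 0 ^ 1 * X 1 ^ 3) +
      C (b ^ 4) * (X 0 ^ 0 * X 1 ^ 4) := by
  rw [smul_eq_C_mul, smul_eq_C_mul]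
  simp only [map_mul, map_pow, map_ofNat]
  ring

private lemma coeff_pow4 (a b : ℤ) (c d : ℕ) :
    coeff (D2 c d) ((a • (X 0 : MvPolynomial (Fin 2) ℤ) + b • X 1) ^ 4) =
      (if c = 4 ∧ d = 0 then a ^ 4 else 0) + (if c = 3 ∧ d = 1 then 4 * a ^ 3 * b else 0) +
      (if c = 2 ∧ d = 2 then 6 * a ^ 2 * b ^ 2 else 0) +
      (if c = 1 ∧ d = 3 then 4 * a * b ^ 3 else 0) +
      (if c = 0 ∧ d = 4 then b ^ 4 else 0) := by
  rw [expand4]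
  simp only [coeff_add, coeff_C_mul, coeff_Xij, mul_ite, mul_one, mul_zero]

private lemma core2 (l : ℕ) (hl : 0 < l) (a b : ℤ)
    (h : ((a • X 0 + b • X 1 : MvPolynomial (Fin 2) ℤ)) ^ 4 ∈ Hideal l 1) : a = 0 := by
  rw [Hideal_one, Ideal.mem_span_pair] at h
  obtain ⟨u, v, huv⟩ := h
  have hcoeff : ∀ c d : ℕ,
      coeff (D2 c d) (u * (X 1 : MvPolynomial (Fin 2) ℤ) ^ 4 +
        v * ((X 0 : MvPolynomial (Fin 2) ℤ) ^ 4 + (l : ℤ) • (X 0 ^ 3 * X 1))) =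
      coeff (D2 c d) ((a • X 0 + b • X 1 : MvPolynomial (Fin 2) ℤ) ^ 4) :=
    fun c d => congrArg _ huv
  have expand_lhs : ∀ c d : ℕ,
      coeff (D2 c d) (u * (X 1 : MvPolynomial (Fin 2) ℤ) ^ 4 +
        v * ((X 0 : MvPolynomial (Fin 2) ℤ) ^ 4 + (l : ℤ) • (X 0 ^ 3 * X 1))) =
      coeff (D2 c d) (u * X 1 ^ 4) + coeff (D2 c d) (v * X 0 ^ 4) +
        (l : ℤ) * coeff (D2 c d) (v * (X 0 ^ 3 * X 1)) := by
    intro c d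
    rw [mul_add, mul_smul_comm, coeff_add, coeff_add, coeff_smul, smul_eq_mul]
    ring
  have e22 : (0 : ℤ) = 6 * a ^ 2 * b ^ 2 := by
    have := hcoeff 2 2
    rw [expand_lhs, coeff_pow4, coeff_mul_A u _ _ (by norm_num),
      coeff_mul_X04_low v _ _ (by norm_num), coeff_mul_B2_low v _ _ (by norm_num)] at this
    simpa using this
  have e40 : coeff 0 v = a ^ 4 := by
    have := hcoeff 4 0
    rw [expand_lhs, coeff_pow4, coeff_mul_A u _ _ (by norm_num),
      coeff_mul_X04_40 v, coeff_mul_B2_low v _ _ (by norm_num)] at this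
    simpa using this
  have e31 : (l : ℤ) * coeff 0 v = 4 * a ^ 3 * b := by
    have := hcoeff 3 1
    rw [expand_lhs, coeff_pow4, coeff_mul_A u _ _ (by norm_num),
      coeff_mul_X04_low v _ _ (by norm_num), coeff_mul_B2_31 v] at this
    simpa using this
  have hab : a = 0 ∨ b = 0 := by
    have h2 : (a * b) ^ 2 = 0 := by nlinarith [e22]
    rcases mul_eq_zero.mp (pow_eq_zero_iff (n := 2) (by norm_num) |>.mp h2) with h | h
    · exact Or.inl h
    · exact Or.inr h
  rcases hab with h | h
  · exact h
  · subst h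
    rw [e40] at e31
    have hl' : (l : ℤ) ≠ 0 := by exact_mod_cast hl.ne'
    have : a ^ 4 = 0 := by
      rcases mul_eq_zero.mp (by linarith [e31] : (l : ℤ) * a ^ 4 = 0) with h | h
      · exact absurd h hl'
      · exact h
    exact pow_eq_zero_iff (by norm_num) |>.mp this

private lemma degree_one_single {σ : Type*} (d : σ →₀ ℕ) (h : Finsupp.degree d = 1) :
    ∃ s, d = Finsupp.single s 1 := by
  classical
  have hd0 : d ≠ 0 := by
    rintro rfl
    rw [(Finsupp.degree_eq_zero_iff 0).mpr rfl] at h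
    exact one_ne_zero h.symm
  obtain ⟨s, hs⟩ : ∃ s, d s ≠ 0 := by
    by_contra hc
    push_neg at hc
    exact hd0 (Finsupp.ext fun t => hc t)
  refine ⟨s, ?_⟩
  have hmem : s ∈ d.support := Finsupp.mem_support_iff.mpr hs
  have hsum : ∑ t ∈ d.support.erase s, d t + d s = 1 := by
    rw [Finset.sum_erase_add _ _ hmem]
    exact h
  have h1 : 1 ≤ d s := Nat.one_le_iff_ne_zero.mpr hs
  have hds : d s = 1 := by omega
  have herase : ∀ t ∈ d.support.erase s, d t = 0 := by
    intro t ht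
    exact Finset.sum_eq_zero_iff.mp (by omega) t ht
  ext t
  rcases eq_or_ne t s with rfl | hts
  · rw [hds, Finsupp.single_eq_same]
  · rw [Finsupp.single_eq_of_ne' (Ne.symm hts)]
    by_cases htm : t ∈ d.support
    · exact herase t (Finset.mem_erase.mpr ⟨hts, htm⟩)
    · simpa using Finsupp.notMem_support_iff.mp htm

private lemma homog_one_decomp {m : ℕ} (y : MvPolynomial (Fin m) ℤ)
    (hy : y.IsHomogeneous 1) :
    y = ∑ s : Fin m, (coeff (Finsupp.single s 1) y) • X s := by
  apply MvPolynomial.ext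
  intro d
  rw [coeff_sum]
  simp only [coeff_smul, coeff_X', smul_eq_mul, mul_ite, mul_one, mul_zero]
  by_cases hd : ∃ s, d = Finsupp.single s 1
  · obtain ⟨s, rfl⟩ := hd
    rw [Finset.sum_eq_single s]
    · rw [if_pos rfl]
    · intro t _ hts
      rw [if_neg]
      intro hc
      exact hts (Finsupp.single_left_injective one_ne_zero hc)
    · intro h
      exact absurd (Finset.mem_univ s) h

  · have hdz : coeff d y = 0 := by
      apply hy.coeff_eq_zero
      intro hdeg
      obtain ⟨s, rfl⟩ := degree_one_single d hdeg
      exact hd ⟨s, rfl⟩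
    rw [hdz, Finset.sum_eq_zero]
    intro t _
    rw [if_neg]
    intro hc
    exact hd ⟨t, hc.symm⟩

private def Sset (n j : ℕ) : Set (MvPolynomial (Fin (n + 1)) ℤ) :=
  {p | ∃ i : Fin (n + 1), (n + 1) - j ≤ (i : ℕ) ∧ p = X i}

private def HgenSet (m n : ℕ) : Set (MvPolynomial (Fin (n + 1)) ℤ) :=
  {X (Fin.last n) ^ 4} ∪
    Set.range fun i : Fin n =>
      X (Fin.castSucc i) ^ 4 + (m : ℤ) • (X (Fin.castSucc i) ^ 3 * X i.succ)

private lemma Hideal_eq_span (m n : ℕ) : Hideal m n = Ideal.span (HgenSet m n) := rfl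

private lemma Iideal_eq_map (m n j : ℕ) :
    Iideal m n j = Ideal.map (Ideal.Quotient.mk (Hideal m n)) (Ideal.span (Sset n j)) := by
  rw [Iideal, Ideal.map_span]
  congr 1
  ext x
  constructor
  · rintro ⟨i, hi, rfl⟩
    exact ⟨X i, ⟨i, hi, rfl⟩, rfl⟩
  · rintro ⟨p, ⟨i, hi, rfl⟩, rfl⟩
    exact ⟨i, hi, rfl⟩

private lemma mem_span_of_mem_Iideal {m n j : ℕ} {q : MvPolynomial (Fin (n + 1)) ℤ}
    (h : Ideal.Quotient.mk (Hideal m n) q ∈ Iideal m n j) :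
    q ∈ Ideal.span (HgenSet m n ∪ Sset n j) := by
  rw [Iideal_eq_map] at h
  have hq : q ∈ Ideal.comap (Ideal.Quotient.mk (Hideal m n))
      (Ideal.map (Ideal.Quotient.mk (Hideal m n)) (Ideal.span (Sset n j))) := h
  rw [Ideal.comap_map_of_surjective _ Ideal.Quotient.mk_surjective, ← RingHom.ker_eq_comap_bot, Ideal.mk_ker] at hq
  rw [Ideal.span_union, sup_comm, ← Hideal_eq_span]
  exact hq

set_option maxHeartbeats 1000000 in
private lemma coeff_eq_zero_of_pow4_mem (l n j : ℕ) (hl : 0 < l)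
    (y : MvPolynomial (Fin (n + 1)) ℤ) (hy : y.IsHomogeneous 1)
    (hmem : y ^ 4 ∈ Ideal.span (HgenSet l n ∪ Sset n j))
    (r : ℕ) (hr : r + 1 ≤ n - j) :
    coeff (Finsupp.single (⟨r, by omega⟩ : Fin (n + 1)) 1) y = 0 := by
  have hjn : j < n := by omega
  set V : HRing l 1 := Ht l 1 0 with hV
  set W : HRing l 1 := Ht l 1 1 with hW
  have hW4 : W ^ 4 = 0 := by
    rw [hW, Ht, ← map_pow, Ideal.Quotient.eq_zero_iff_mem, Hideal_one]
    exact Ideal.subset_span (Set.mem_insert _ _)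
  have hVW : V ^ 4 + (l : ℤ) • (V ^ 3 * W) = 0 := by
    rw [hV, hW, Ht, Ht, ← map_pow, ← map_pow, ← map_mul, ← map_zsmul, ← map_add,
      Ideal.Quotient.eq_zero_iff_mem, Hideal_one]
    exact Ideal.subset_span (Set.mem_insert_iff.mpr (Or.inr rfl))
  set v : Fin (n + 1) → HRing l 1 :=
    fun s => if (s : ℕ) = r then V else if (s : ℕ) = r + 1 then W else 0 with hv
  have hvV : ∀ s : Fin (n + 1), (s : ℕ) = r → v s = V := by
    intro s hs
    simp only [hv]
    rw [if_pos hs]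
  have hvW : ∀ s : Fin (n + 1), (s : ℕ) = r + 1 → v s = W := by
    intro s hs
    simp only [hv]
    rw [if_neg (by omega), if_pos hs]
  have hv0 : ∀ s : Fin (n + 1), (s : ℕ) ≠ r → (s : ℕ) ≠ r + 1 → v s = 0 := by
    intro s h1 h2
    simp only [hv]
    rw [if_neg h1, if_neg h2]
  have hker : ∀ g ∈ HgenSet l n ∪ Sset n j, aeval v g = 0 := by
    rintro g (hg | hg)
    · rcases hg with hg | ⟨i', rfl⟩
      · rw [Set.mem_singleton_iff] at hg
        subst hg
        rw [map_pow, aeval_X]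
        have h1 : ((Fin.last n : Fin (n + 1)) : ℕ) = n := rfl
        by_cases h2 : n = r + 1
        · rw [hvW _ (h1.trans h2), hW4]
        · rw [hv0 _ (by omega) (by omega)]
          simp
      · simp only [map_add, map_pow, map_zsmul, map_mul, aeval_X]
        have hc : ((Fin.castSucc i' : Fin (n + 1)) : ℕ) = (i' : ℕ) := rfl
        have hs : ((i'.succ : Fin (n + 1)) : ℕ) = (i' : ℕ) + 1 := rfl
        by_cases h1 : (i' : ℕ) = r
        · rw [hvV _ (hc.trans h1), hvW _ (by omega), hVW]
        · by_cases h2 : (i' : ℕ) = r + 1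
          · rw [hvW _ (hc.trans h2), hv0 _ (by omega) (by omega),
              mul_zero, smul_zero, add_zero, hW4]
          · rw [hv0 _ (by omega) (by omega)]
            simp
    · obtain ⟨u, hu, rfl⟩ := hg
      rw [aeval_X]
      have hu2 : r + 2 ≤ (u : ℕ) := by omega
      exact hv0 _ (by omega) (by omega)
  have hψ4 : (aeval v y) ^ 4 = 0 := by
    rw [← map_pow]
    have hle : Ideal.span (HgenSet l n ∪ Sset n j) ≤
        RingHom.ker (aeval v : MvPolynomial (Fin (n + 1)) ℤ →ₐ[ℤ] HRing l 1).toRingHom :=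
      Ideal.span_le.mpr fun g hg => hker g hg
    exact hle hmem
  set R : Fin (n + 1) := ⟨r, by omega⟩ with hR
  set R' : Fin (n + 1) := ⟨r + 1, by omega⟩ with hR'
  have hRR' : R ≠ R' := by
    rw [hR, hR', Ne, Fin.ext_iff]
    simp
  set a : ℤ := coeff (Finsupp.single R 1) y with ha
  set b : ℤ := coeff (Finsupp.single R' 1) y with hb
  have hψy : aeval v y = a • V + b • W := by
    conv_lhs => rw [homog_one_decomp y hy]
    rw [map_sum]
    have hpt : ∀ s : Fin (n + 1),
        (aeval v) ((coeff (Finsupp.single s 1) y) • X s : MvPolynomial (Fin (n + 1)) ℤ) =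
          (if s = R then (coeff (Finsupp.single s 1) y) • V else 0) +
          (if s = R' then (coeff (Finsupp.single s 1) y) • W else 0) := by
      intro s
      rw [map_zsmul, aeval_X]
      by_cases h1 : s = R
      · rw [if_pos h1, if_neg (h1 ▸ hRR'), add_zero, hvV s (by rw [h1, hR])]
      · by_cases h2 : s = R'
        · rw [if_neg h1, if_pos h2, zero_add, hvW s (by rw [h2, hR'])]
        · rw [if_neg h1, if_neg h2, add_zero,
            hv0 s (fun hc => h1 (Fin.ext hc)) (fun hc => h2 (Fin.ext hc)), smul_zero]
    rw [Finset.sum_congr rfl fun s _ => hpt s, Finset.sum_add_distrib,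
      Finset.sum_ite_eq' Finset.univ R, Finset.sum_ite_eq' Finset.univ R',
      if_pos (Finset.mem_univ R), if_pos (Finset.mem_univ R')]
  have key : (Ideal.Quotient.mk (Hideal l 1)) (a • X 0 + b • X 1) = a • V + b • W := by
    rw [map_add, map_zsmul (Ideal.Quotient.mk (Hideal l 1)) a ((X 0 : MvPolynomial (Fin 2) ℤ)),
      map_zsmul (Ideal.Quotient.mk (Hideal l 1)) b ((X 1 : MvPolynomial (Fin 2) ℤ))]
    rfl
  have hmem2 : ((a • X 0 + b • X 1 : MvPolynomial (Fin 2) ℤ)) ^ 4 ∈ Hideal l 1 := by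
    rw [← Ideal.Quotient.eq_zero_iff_mem, map_pow, key, ← hψy, hψ4]
  exact core2 l hl a b hmem2
private lemma Iideal_mono (m n : ℕ) {j j' : ℕ} (h : j ≤ j') : Iideal m n j ≤ Iideal m n j' := by
  apply Ideal.span_mono
  rintro x ⟨i, hi, rfl⟩
  exact ⟨i, le_trans (Nat.sub_le_sub_left h _) hi, rfl⟩

private lemma step (k l n j : ℕ) (hl : 0 < l)
    (φ : HRing k n →+* HRing l n) (hφ : PreservesGrading φ)
    (hmap : Ideal.map φ (Iideal k n j) ≤ Iideal l n j) :
    Ideal.map φ (Iideal k n (j + 1)) ≤ Iideal l n (j + 1) := by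
  rw [Iideal, Ideal.map_span, Ideal.span_le]
  rintro w ⟨x, ⟨i, hi, rfl⟩, rfl⟩
  show φ (Ht k n i) ∈ Iideal l n (j + 1)
  by_cases hA : (n + 1) - j ≤ (i : ℕ)
  · exact Iideal_mono l n (Nat.le_succ j)
      (hmap (Ideal.mem_map_of_mem φ (Ideal.subset_span ⟨i, hA, rfl⟩)))
  · have hisLt : (i : ℕ) < n + 1 := i.isLt
    have hij : (i : ℕ) = n - j := by omega
    have hx4 : (Ht k n i) ^ 4 ∈ Iideal k n j := by
      rcases Nat.lt_or_ge (i : ℕ) n with hin | hin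
      · set i' : Fin n := ⟨(i : ℕ), hin⟩ with hi'
        have hrel : (X (Fin.castSucc i') ^ 4 +
            (k : ℤ) • (X (Fin.castSucc i') ^ 3 * X i'.succ)) ∈ Hideal k n :=
          Ideal.subset_span (Or.inr ⟨i', rfl⟩)
        have hcs : Fin.castSucc i' = i := Fin.ext rfl
        have hq : Ideal.Quotient.mk (Hideal k n) (X (Fin.castSucc i') ^ 4 +
            (k : ℤ) • (X (Fin.castSucc i') ^ 3 * X i'.succ)) = 0 :=
          Ideal.Quotient.eq_zero_iff_mem.mpr hrel
        have hpow : (Ht k n i) ^ 4 = - ((k : ℤ) • ((Ht k n i) ^ 3 * Ht k n i'.succ)) := by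
          rw [eq_neg_iff_add_eq_zero, Ht, Ht, ← map_pow, ← map_pow, ← map_mul, ← hcs,
            ← map_zsmul (Ideal.Quotient.mk (Hideal k n)), ← map_add, hq]
        rw [hpow]
        apply neg_mem
        rw [zsmul_eq_mul]
        apply Ideal.mul_mem_left
        apply Ideal.mul_mem_left
        have hsuccval : ((i'.succ : Fin (n + 1)) : ℕ) = (i : ℕ) + 1 := rfl
        exact Ideal.subset_span ⟨i'.succ, by omega, rfl⟩
      · have hlast : i = Fin.last n := Fin.ext (by simp only [Fin.val_last]; omega)
        rw [hlast]
        have hq : (Ht k n (Fin.last n)) ^ 4 = 0 := by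
          rw [Ht, ← map_pow, Ideal.Quotient.eq_zero_iff_mem]
          exact Ideal.subset_span (Or.inl rfl)
        rw [hq]
        exact zero_mem _
    have h4 : (φ (Ht k n i)) ^ 4 ∈ Iideal l n j := by
      rw [← map_pow]
      exact hmap (Ideal.mem_map_of_mem φ hx4)
    obtain ⟨y, hy1, hy2⟩ := hφ 1 (X i) (isHomogeneous_X _ _)
    have hφx : φ (Ht k n i) = Ideal.Quotient.mk (Hideal l n) y := hy2
    rw [hφx] at h4 ⊢
    have hy4 : y ^ 4 ∈ Ideal.span (HgenSet l n ∪ Sset n j) := by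
      apply mem_span_of_mem_Iideal
      rw [map_pow]
      exact h4
    rw [homog_one_decomp y hy1, map_sum]
    apply Ideal.sum_mem
    intro s _
    rw [map_zsmul (Ideal.Quotient.mk (Hideal l n)) _ (X s)]
    by_cases hs : (n + 1) - (j + 1) ≤ (s : ℕ)
    · rw [zsmul_eq_mul]
      exact Ideal.mul_mem_left _ _ (Ideal.subset_span ⟨s, hs, rfl⟩)
    · have hsr : (s : ℕ) + 1 ≤ n - j := by omega
      have hzero : coeff (Finsupp.single s 1) y = 0 :=
        coeff_eq_zero_of_pow4_mem l n j hl y hy1 hy4 (s : ℕ) hsr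
      rw [hzero, zero_smul]
      exact zero_mem _

private lemma Iideal_zero (m n : ℕ) : Iideal m n 0 = ⊥ := by
  rw [Iideal]
  have : {x : HRing m n | ∃ i : Fin (n + 1), (n + 1) - 0 ≤ (i : ℕ) ∧ x = Ht m n i} = ∅ := by
    ext x
    simp only [Set.mem_setOf_eq, Set.mem_empty_iff_false, iff_false, not_exists]
    intro i hi
    exact absurd hi.1 (by have := i.isLt; omega)
  rw [this, Ideal.span_empty]

theorem stmt13 (k l n : ℕ) (hk : 0 < k) (hl : 0 < l)
    (f : HRing k n ≃+* HRing l n) (hf : IsGradedIso f)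
    (j : ℕ) (hj1 : 1 ≤ j) (hj2 : j ≤ n + 1) :
    Ideal.map (f : HRing k n →+* HRing l n) (Iideal k n j) = Iideal l n j := by
  obtain ⟨hfwd, hbwd⟩ := hf
  have main : ∀ j : ℕ,
      Ideal.map (f : HRing k n →+* HRing l n) (Iideal k n j) ≤ Iideal l n j ∧
      Ideal.map (f.symm : HRing l n →+* HRing k n) (Iideal l n j) ≤ Iideal k n j := by
    intro j
    induction j with
    | zero => rw [Iideal_zero, Iideal_zero, Ideal.map_bot, Ideal.map_bot]; exact ⟨le_rfl, le_rfl⟩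
    | succ j ih =>
      exact ⟨step k l n j hl _ hfwd ih.1, step l k n j hk _ hbwd ih.2⟩
  apply le_antisymm (main j).1
  intro x hx
  have hxx : x = f (f.symm x) := (f.apply_symm_apply x).symm
  rw [hxx]
  exact Ideal.mem_map_of_mem _ ((main j).2 (Ideal.mem_map_of_mem _ hx))
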